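/- Every context-free game with the bounded depth property has a weakly dominant one-pass strategy. -/

import Mathlib

namespace CFG

/-- Juliet's two kinds of moves. -/
inductive JMove : Type
  | call : JMove
  | read : JMove
deriving DecidableEq

/-- The extended alphabet Σ̂: `Sum.inl a` is the plain symbol `a`,
`Sum.inr a` is the "called" copy `â`. -/
abbrev HSym (A : Type) : Type := A ⊕ A

/-- The homomorphism ♮ deleting called symbols. -/
def flat {A : Type} (α : List (HSym A)) : List A :=
  α.filterMap (fun x => match x with | Sum.inl a => some a | Sum.inr _ => none)

/-- A context-free game: a (minimal) DFA `T` over `A` with finite state set `Q`,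
and a replacement relation `R` with nonempty replacement words and regular
replacement languages. -/
structure CFGame (A : Type) where
  Q : Type
  fintypeQ : Fintype Q
  T : DFA A Q
  minimal_reachable : ∀ q : Q, ∃ w : List A, T.evalFrom T.start w = q
  minimal_distinguishable :
    ∀ q q' : Q, (∀ w : List A, T.evalFrom q w ∈ T.accept ↔ T.evalFrom q' w ∈ T.accept) → q = q'
  R : A → List A → Prop
  R_ne : ∀ a v, R a v → v ≠ []
  R_regular : ∀ a, Language.IsRegular {v : List A | R a v}

variable {A : Type}

/-- `a` is a function symbol (its replacement language is nonempty). -/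
def CFGame.Fn (G : CFGame A) (a : A) : Prop := ∃ v, G.R a v

/-- One-pass strategies of Juliet (values at non-function symbols are irrelevant). -/
abbrev JStrat (A : Type) : Type := List (HSym A) → A → JMove

/-- Strategies of Romeo (values at non-function symbols are irrelevant). -/
abbrev RStrat (A : Type) : Type := List (HSym A) → A → List A

/-- Validity of a Romeo strategy: replacement words belong to the replacement language. -/
def CFGame.RValid (G : CFGame A) (τ : RStrat A) : Prop :=
  ∀ (α : List (HSym A)) (a : A), G.Fn a → G.R a (τ α a)

/-- Configurations, instrumented for depth bookkeeping: a history string, the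
remaining string where every symbol is annotated with its call-nesting level,
and the maximal nesting depth of the `Call` moves played so far. -/
abbrev Config (A : Type) : Type := List (HSym A) × List (A × ℕ) × ℕ

/-- One step of a play: Juliet reads or calls the current symbol according to `σ`
(a call is only possible at a function symbol); a call is answered by `τ`. -/
noncomputable def CFGame.step (G : CFGame A) (σ : JStrat A) (τ : RStrat A) :
    Config A → Config A :=
  fun c =>
    match c with
    | (α, [], d) => (α, [], d)
    | (α, (a, k) :: v, d) =>
      letI := Classical.propDecidable (G.Fn a ∧ σ α a = JMove.call)
      if G.Fn a ∧ σ α a = JMove.call then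
        (α ++ [Sum.inr a], (τ α a).map (fun b => (b, k + 1)) ++ v, max d (k + 1))
      else (α ++ [Sum.inl a], v, d)

/-- The play of `σ` against `τ` on input word `w`, as the sequence of its
configurations (the configuration stays fixed once the remaining string is empty). -/
noncomputable def CFGame.play (G : CFGame A) (σ : JStrat A) (τ : RStrat A)
    (w : List A) (n : ℕ) : Config A :=
  (G.step σ τ)^[n] ([], w.map (fun a => (a, 0)), 0)

/-- `σ` wins on `w`: against every (valid) Romeo strategy, the play on `w` is
finite and its final string belongs to the target language. -/
def CFGame.WinsOn (G : CFGame A) (σ : JStrat A) (w : List A) : Prop :=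
  ∀ τ : RStrat A, G.RValid τ →
    ∃ n : ℕ, (G.play σ τ w n).2.1 = [] ∧
      G.T.evalFrom G.T.start (flat (G.play σ τ w n).1) ∈ G.T.accept

/-- The winning set `W(σ)`. -/
def CFGame.W (G : CFGame A) (σ : JStrat A) : Set (List A) := {w | G.WinsOn σ w}

/-- `σ` is terminating: every play of `σ` is finite. -/
def CFGame.Terminating (G : CFGame A) (σ : JStrat A) : Prop :=
  ∀ τ : RStrat A, G.RValid τ → ∀ w : List A, ∃ n : ℕ, (G.play σ τ w n).2.1 = []

/-- `σ` is dominant: it dominates every one-pass strategy. -/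
def CFGame.Dominant (G : CFGame A) (σ : JStrat A) : Prop :=
  ∀ σ' : JStrat A, G.W σ' ⊆ G.W σ

/-- `σ` is undominated: no one-pass strategy strictly dominates it. -/
def CFGame.Undominated (G : CFGame A) (σ : JStrat A) : Prop :=
  ¬ ∃ σ' : JStrat A, G.W σ ⊂ G.W σ'

/-- `σ` is forgetful: its decisions only depend on `♮α` and the current symbol. -/
def CFGame.Forgetful (G : CFGame A) (σ : JStrat A) : Prop :=
  ∀ (α β : List (HSym A)) (a : A), G.Fn a → flat α = flat β → σ α a = σ β a

/-- `σ` is regular: the language `{αa : σ(α,a) = Call}` over Σ̂ is regular. -/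
def CFGame.RegularStrat (G : CFGame A) (σ : JStrat A) : Prop :=
  Language.IsRegular
    {x : List (HSym A) | ∃ (α : List (HSym A)) (a : A),
      G.Fn a ∧ σ α a = JMove.call ∧ x = α ++ [Sum.inl a]}

/-- One step of a strategy automaton of a strongly regular strategy, on the state
set `Q ∪ {Call}` (`none` is the absorbing state `Call`). -/
def optStep {Q : Type} (δA : Q → A → Option Q) (o : Option Q) (a : A) : Option Q :=
  o.bind (fun q => δA q a)

/-- `σ` is strongly regular: given by an automaton obtained from `T` by rerouting
some transitions to a new accepting state `Call`; Juliet plays `Call` on `(α,a)`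
iff the automaton maps `♮α·a` to `Call`. -/
def CFGame.StronglyRegular (G : CFGame A) (σ : JStrat A) : Prop :=
  ∃ δA : G.Q → A → Option G.Q,
    (∀ q a, δA q a = some (G.T.step q a) ∨ δA q a = none) ∧
    ∀ (α : List (HSym A)) (a : A), G.Fn a →
      (σ α a = JMove.call ↔
        List.foldl (optStep δA) (some G.T.start) (flat α ++ [a]) = none)

/-- Shortlex (strict) order on words. -/
def shortLex [LinearOrder A] (v w : List A) : Prop :=
  v.length < w.length ∨ (v.length = w.length ∧ List.Lex (· < ·) v w)

/-- `V <_sl W` for sets of words: the shortlex-least word of the symmetric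
difference belongs to `W`. -/
def slLT [LinearOrder A] (V W : Set (List A)) : Prop :=
  ∃ w : List A, w ∈ W ∧ w ∉ V ∧ ∀ v : List A, shortLex v w → (v ∈ V ↔ v ∈ W)

/-- `V ≤_sl W` for sets of words. -/
def slLE [LinearOrder A] (V W : Set (List A)) : Prop := V = W ∨ slLT V W

/-- `σ` is weakly dominant: `W(σ') ≤_sl W(σ)` for every one-pass strategy `σ'`. -/
def CFGame.WeaklyDominant [LinearOrder A] (G : CFGame A) (σ : JStrat A) : Prop :=
  ∀ σ' : JStrat A, slLE (G.W σ') (G.W σ)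

/-- The bounded depth property. -/
def CFGame.BoundedDepthProperty (G : CFGame A) : Prop :=
  ∃ B : ℕ → ℕ, ∀ σ : JStrat A, ∀ k : ℕ, ∃ σk : JStrat A,
    ∀ w ∈ G.W σ, w.length ≤ k →
      G.WinsOn σk w ∧
      ∀ τ : RStrat A, G.RValid τ → ∀ n : ℕ, (G.play σk τ w n).2.2 ≤ B w.length

/-- Prefix-freeness of all replacement languages. -/
def CFGame.PrefixFree (G : CFGame A) : Prop :=
  ∀ (a : A) (u v : List A), G.R a u → G.R a v → u <+: v → u = v

/-- Non-recursiveness: no function symbol can be derived from itself. -/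
def CFGame.NonRecursive (G : CFGame A) : Prop :=
  ¬ ∃ (n : ℕ) (f : ℕ → A), 1 ≤ n ∧ f 0 = f n ∧ (∀ i ≤ n, G.Fn (f i)) ∧
    ∀ k < n, ∃ v : List A, G.R (f k) v ∧ f (k + 1) ∈ v

/-- `σ` is almost undominated: only finitely many words are lost by `σ` but won
by some strategy dominating `σ`. -/
def CFGame.AlmostUndominated (G : CFGame A) (σ : JStrat A) : Prop :=
  Set.Finite {w : List A | ¬ G.WinsOn σ w ∧
    ∃ σ' : JStrat A, G.W σ ⊆ G.W σ' ∧ G.WinsOn σ' w}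

/-- Convergence of a sequence of one-pass strategies. -/
def Converges (G : CFGame A) (σs : ℕ → JStrat A) (σ : JStrat A) : Prop :=
  ∀ n : ℕ, ∃ k0 : ℕ, ∀ k ≥ k0, ∀ α : List (HSym A), α.length ≤ n →
    ∀ a : A, G.Fn a → σ α a = σs k α a

/-- The one-pass strategy defined by a DFA `M` over Σ̂ (a strategy automaton):
play `Call` on `(α,a)` iff `M` accepts `α·a`. -/
noncomputable def autoStrat {S : Type} (M : DFA (HSym A) S) : JStrat A :=
  fun α a =>
    letI := Classical.propDecidable (M.eval (α ++ [Sum.inl a]) ∈ M.accept)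
    if M.eval (α ++ [Sum.inl a]) ∈ M.accept then JMove.call else JMove.read

/-- `States(q; w, σ)`: the `T`-states `δ*(q, ♮α)` over final history strings `α`
of plays of `σ` on `w`. -/
def CFGame.StatesOf (G : CFGame A) (σ : JStrat A) (q : G.Q) (w : List A) : Set G.Q :=
  {q' | ∃ τ : RStrat A, G.RValid τ ∧ ∃ n : ℕ,
    (G.play σ τ w n).2.1 = [] ∧ G.T.evalFrom q (flat (G.play σ τ w n).1) = q'}

/-- `(p, a, S)` is an effect triple of `σ`. -/
def CFGame.IsEffectTriple (G : CFGame A) (σ : JStrat A) (t : G.Q × A × Set G.Q) : Prop :=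
  G.StatesOf σ t.1 [t.2.1] ⊆ t.2.2

/-- An effect triple is trivial if `δ(p,a) ∈ S`. -/
def CFGame.TrivialTriple (G : CFGame A) (t : G.Q × A × Set G.Q) : Prop :=
  G.T.step t.1 t.2.1 ∈ t.2.2

/-- The substrategy `σ^α`. -/
def subStrat (σ : JStrat A) (α : List (HSym A)) : JStrat A :=
  fun β a => σ (α ++ β) a

/-- The effect set `E(σ)`: all effect triples of all substrategies of `σ`. -/
def CFGame.EffectSet (G : CFGame A) (σ : JStrat A) : Set (G.Q × A × Set G.Q) :=
  {t | ∃ α : List (HSym A), G.IsEffectTriple (subStrat σ α) t}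

/-- The transition relation of the NFA `N_E` associated with a set `E` of effect
triples (state set `P(Q)`, initial state `{s}`, accepting states the subsets of `F`). -/
def CFGame.NEStep (G : CFGame A) (E : Set (G.Q × A × Set G.Q))
    (S : Set G.Q) (a : A) (S' : Set G.Q) : Prop :=
  ∀ p ∈ S, ∃ S'' : Set G.Q, S'' ⊆ S' ∧ (p, a, S'') ∈ E

/-- A strategy for the online word problem `OnlineNFA(N_E)`. -/
def CFGame.NEOnlineStrat (G : CFGame A) (E : Set (G.Q × A × Set G.Q))
    (ρ : List A → Set G.Q) : Prop :=
  ρ [] = {G.T.start} ∧ ∀ (w : List A) (a : A), G.NEStep E (ρ w) a (ρ (w ++ [a]))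

/-- The winning set of a strategy for `OnlineNFA(N_E)`. -/
def CFGame.NEWins (G : CFGame A) (ρ : List A → Set G.Q) : Set (List A) :=
  {w | ρ w ⊆ G.T.accept}

/-- A strategy automaton `M` is `(p,a,St)`-inducing. -/
def CFGame.Inducing (G : CFGame A) {S : Type} (M : DFA (HSym A) S)
    (p : G.Q) (a : A) (St : Set G.Q) : Prop :=
  G.Terminating (autoStrat M) ∧ G.Fn a ∧
  (∀ u : List A, G.R a u → G.StatesOf (autoStrat M) p u ⊆ St) ∧
  ∃ QA : G.Q → Set S,
    (∀ q ∈ St, ∀ q' ∈ St, q ≠ q' → Disjoint (QA q) (QA q')) ∧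
    ∀ u : List A, G.R a u → ∀ τ : RStrat A, G.RValid τ → ∀ n : ℕ,
      (G.play (autoStrat M) τ u n).2.1 = [] →
      ((∀ q ∈ St,
          (M.eval (G.play (autoStrat M) τ u n).1 ∈ QA q ↔
            G.T.evalFrom p (flat (G.play (autoStrat M) τ u n).1) = q)) ∧
        ∀ β : List (HSym A), β <+: (G.play (autoStrat M) τ u n).1 →
          β ≠ (G.play (autoStrat M) τ u n).1 → ∀ r ∈ St, M.eval β ∉ QA r)


section ShortLexFacts
set_option linter.unusedSectionVars false

variable {A : Type} [Fintype A] [LinearOrder A]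

lemma shortLex_trans {u v w : List A} (h1 : shortLex u v) (h2 : shortLex v w) :
    shortLex u w := by
  rcases h1 with h1 | ⟨e1, l1⟩ <;> rcases h2 with h2 | ⟨e2, l2⟩
  · exact Or.inl (h1.trans h2)
  · exact Or.inl (e2 ▸ h1)
  · exact Or.inl (e1 ▸ h2)
  · exact Or.inr ⟨e1.trans e2, List.lex_trans lt_trans l1 l2⟩

lemma shortLex_irrefl (w : List A) : ¬ shortLex w w := by
  rintro (h | ⟨-, h⟩)
  · exact lt_irrefl _ h
  · exact irrefl_of (List.Lex (· < ·)) w h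

lemma shortLex_total {v w : List A} (h : v ≠ w) : shortLex v w ∨ shortLex w v := by
  rcases lt_trichotomy v.length w.length with hl | hl | hl
  · exact Or.inl (Or.inl hl)
  · rcases @trichotomous _ (List.Lex (· < ·)) (List.Lex.trichotomous _) v w with ht | ht | ht
    · exact Or.inl (Or.inr ⟨hl, ht⟩)
    · exact absurd ht h
    · exact Or.inr (Or.inr ⟨hl.symm, ht⟩)
  · exact Or.inr (Or.inl hl)

lemma shortLex_finite (w : List A) : {v : List A | shortLex v w}.Finite :=
  (List.finite_length_le A w.length).subset (fun v hv => by
    rcases hv with h | ⟨h, -⟩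
    · exact le_of_lt h
    · exact le_of_eq h)

lemma shortLex_wf : WellFounded (shortLex (A := A)) := by
  have hsub : Subrelation (shortLex (A := A))
      (InvImage (· < ·) (fun w => {v : List A | shortLex v w}.ncard)) := by
    intro v w h
    have hsub2 : {u : List A | shortLex u v} ⊆ {u | shortLex u w} :=
      fun u hu => shortLex_trans hu h
    exact Set.ncard_lt_ncard ((Set.ssubset_iff_of_subset hsub2).2
      ⟨v, h, shortLex_irrefl v⟩) (shortLex_finite w)
  exact Subrelation.wf hsub (InvImage.wf _ Nat.lt_wfRel.wf)

lemma exists_shortLex_top (s : Finset (List A)) :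
    s.Nonempty → ∃ m ∈ s, ∀ v ∈ s, v = m ∨ shortLex v m := by
  induction s using Finset.induction_on with
  | empty => intro h; simp at h
  | @insert a t ha ih =>
    intro _
    rcases t.eq_empty_or_nonempty with rfl | htne
    · refine ⟨a, by simp, ?_⟩
      intro v hv; simp at hv; exact Or.inl hv
    · obtain ⟨m, hm, hmax⟩ := ih htne
      rcases eq_or_ne a m with heq | hne'
      · subst heq
        refine ⟨a, Finset.mem_insert_self a t, ?_⟩
        intro v hv
        rcases Finset.mem_insert.1 hv with rfl | hv
        exacts [Or.inl rfl, hmax v hv]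
      · rcases shortLex_total hne' with h | h
        · refine ⟨m, Finset.mem_insert_of_mem hm, ?_⟩
          intro v hv
          rcases Finset.mem_insert.1 hv with rfl | hv
          exacts [Or.inr h, hmax v hv]
        · refine ⟨a, Finset.mem_insert_self a t, ?_⟩
          intro v hv
          rcases Finset.mem_insert.1 hv with rfl | hv
          · exact Or.inl rfl
          · rcases hmax v hv with rfl | hv2
            · exact Or.inr h
            · exact Or.inr (shortLex_trans hv2 h)

end ShortLexFacts
section Best
variable {A : Type} [Fintype A] [LinearOrder A]

noncomputable def best (G : CFGame A) : List A → Prop :=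
  shortLex_wf.fix (fun w ih =>
    ∃ σ : JStrat A, (∀ v, ∀ hv : shortLex v w, (ih v hv ↔ G.WinsOn σ v)) ∧ G.WinsOn σ w)

lemma best_iff (G : CFGame A) (w : List A) :
    best G w ↔ ∃ σ : JStrat A,
      (∀ v, shortLex v w → (best G v ↔ G.WinsOn σ v)) ∧ G.WinsOn σ w := by
  conv_lhs => rw [best, WellFounded.fix_eq]
  exact Iff.rfl

lemma exists_matchThrough (G : CFGame A) (w : List A)
    (hm : ∃ σ : JStrat A, ∀ v, shortLex v w → (best G v ↔ G.WinsOn σ v)) :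
    ∃ σ : JStrat A, (∀ v, shortLex v w → (best G v ↔ G.WinsOn σ v)) ∧
      (best G w ↔ G.WinsOn σ w) := by
  by_cases hb : best G w
  · obtain ⟨σ, h1, h2⟩ := (best_iff G w).1 hb
    exact ⟨σ, h1, iff_of_true hb h2⟩
  · obtain ⟨σ, h1⟩ := hm
    exact ⟨σ, h1, iff_of_false hb fun hw => hb ((best_iff G w).2 ⟨σ, h1, hw⟩)⟩

lemma exists_match (G : CFGame A) :
    ∀ w : List A, ∃ σ : JStrat A, ∀ v, shortLex v w → (best G v ↔ G.WinsOn σ v) := by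
  intro w
  refine shortLex_wf.induction
    (C := fun w => ∃ σ : JStrat A, ∀ v, shortLex v w → (best G v ↔ G.WinsOn σ v)) w ?_
  clear w; intro w ih
  rcases Set.eq_empty_or_nonempty {v : List A | shortLex v w} with he | hne
  · exact ⟨fun _ _ => JMove.read,
      fun v hv => (Set.eq_empty_iff_forall_notMem.1 he v hv).elim⟩
  · obtain ⟨m, hm, hmax⟩ := exists_shortLex_top (shortLex_finite w).toFinset
      (by rwa [Set.Finite.toFinset_nonempty])
    have hmw : shortLex m w := by simpa [Set.Finite.mem_toFinset] using hm
    obtain ⟨σ, h1, h2⟩ := exists_matchThrough G m (ih m hmw)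
    refine ⟨σ, fun v hv => ?_⟩
    rcases hmax v (by simpa [Set.Finite.mem_toFinset] using hv) with rfl | hlt
    · exact h2
    · exact h1 v hlt

lemma exists_matchAll (G : CFGame A) (w : List A) :
    ∃ σ : JStrat A, (∀ v, shortLex v w → (best G v ↔ G.WinsOn σ v)) ∧
      (best G w ↔ G.WinsOn σ w) :=
  exists_matchThrough G w (exists_match G w)

end Best
section Plays
set_option linter.unusedSectionVars false
variable {A : Type} [Fintype A] [LinearOrder A]

lemma play_succ (G : CFGame A) (σ : JStrat A) (τ : RStrat A) (w : List A) (n : ℕ) :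
    G.play σ τ w (n + 1) = G.step σ τ (G.play σ τ w n) := by
  simp [CFGame.play, Function.iterate_succ_apply']

lemma step_nil (G : CFGame A) (σ : JStrat A) (τ : RStrat A) (c : Config A)
    (hc : c.2.1 = []) : G.step σ τ c = c := by
  obtain ⟨α, rem, d⟩ := c
  simp only at hc
  subst hc
  rfl

lemma step_cons_call (G : CFGame A) (σ : JStrat A) (τ : RStrat A) (α : List (HSym A))
    (a : A) (k : ℕ) (v : List (A × ℕ)) (d : ℕ) (h : G.Fn a ∧ σ α a = JMove.call) :
    G.step σ τ (α, (a, k) :: v, d) =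
      (α ++ [Sum.inr a], (τ α a).map (fun b => (b, k + 1)) ++ v, max d (k + 1)) := by
  simp only [CFGame.step]
  rw [if_pos h]

lemma step_cons_read (G : CFGame A) (σ : JStrat A) (τ : RStrat A) (α : List (HSym A))
    (a : A) (k : ℕ) (v : List (A × ℕ)) (d : ℕ) (h : ¬ (G.Fn a ∧ σ α a = JMove.call)) :
    G.step σ τ (α, (a, k) :: v, d) = (α ++ [Sum.inl a], v, d) := by
  simp only [CFGame.step]
  rw [if_neg h]

lemma play_congr (G : CFGame A) (σ1 σ2 : JStrat A) (τ : RStrat A) (w : List A) (n : ℕ)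
    (h : ∀ i < n, ∀ a k v, (G.play σ1 τ w i).2.1 = (a, k) :: v →
      σ2 (G.play σ1 τ w i).1 a = σ1 (G.play σ1 τ w i).1 a) :
    ∀ i ≤ n, G.play σ2 τ w i = G.play σ1 τ w i := by
  intro i hi
  induction i with
  | zero => rfl
  | succ i ih =>
    have hi' : i < n := Nat.lt_of_lt_of_le (Nat.lt_succ_self i) hi
    have heq : G.play σ2 τ w i = G.play σ1 τ w i := ih (Nat.le_of_lt hi')
    rw [play_succ, play_succ, heq]
    rcases hrem : (G.play σ1 τ w i).2.1 with _ | ⟨⟨a, k⟩, v⟩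
    · rw [step_nil _ _ _ _ hrem, step_nil _ _ _ _ hrem]
    · have hs := h i hi' a k v hrem
      have hc : G.play σ1 τ w i =
          ((G.play σ1 τ w i).1, (a, k) :: v, (G.play σ1 τ w i).2.2) := by
        rw [← hrem]
      rw [hc]
      by_cases hcall : G.Fn a ∧ σ1 (G.play σ1 τ w i).1 a = JMove.call
      · rw [step_cons_call _ _ _ _ _ _ _ _ hcall,
          step_cons_call _ _ _ _ _ _ _ _ ⟨hcall.1, by rw [hs]; exact hcall.2⟩]
      · rw [step_cons_read _ _ _ _ _ _ _ _ hcall,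
          step_cons_read _ _ _ _ _ _ _ _
            (fun hc2 => hcall ⟨hc2.1, by rw [← hs]; exact hc2.2⟩)]

lemma play_frozen (G : CFGame A) (σ : JStrat A) (τ : RStrat A) (w : List A) {n : ℕ}
    (hn : (G.play σ τ w n).2.1 = []) :
    ∀ m, n ≤ m → G.play σ τ w m = G.play σ τ w n := by
  intro m hm
  obtain ⟨k, rfl⟩ := Nat.exists_eq_add_of_le hm
  induction k with
  | zero => rfl
  | succ k ih =>
    rw [show n + (k + 1) = (n + k) + 1 by omega, play_succ,
      ih (Nat.le_add_right n k), step_nil _ _ _ _ hn]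

lemma no_descend {β : Sort*} {r : β → β → Prop} (wf : WellFounded r) (f : ℕ → β)
    (h : ∀ n, r (f (n + 1)) (f n)) : False := by
  have H : ∀ b, ∀ n, f n ≠ b := fun b =>
    wf.induction (C := fun b => ∀ n, f n ≠ b) b
      (fun b ih n hn => ih (f (n + 1)) (hn ▸ h n) (n + 1) rfl)
  exact H (f 0) 0 rfl

end Plays
section Termination
set_option linter.unusedSectionVars false
variable {A : Type} [Fintype A] [LinearOrder A]

lemma terminates_of_bounded_depth (G : CFGame A) (σ : JStrat A) (τ : RStrat A)
    (w : List A) (D : ℕ) (hD : ∀ n, (G.play σ τ w n).2.2 ≤ D) :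
    ∃ n, (G.play σ τ w n).2.1 = [] := by
  by_contra hne
  push_neg at hne
  have hlev : ∀ n, ∀ x ∈ (G.play σ τ w n).2.1, x.2 ≤ D := by
    intro n
    induction n with
    | zero =>
      intro x hx
      simp only [CFGame.play, Function.iterate_zero_apply] at hx
      obtain ⟨a, -, rfl⟩ := List.mem_map.1 hx
      exact Nat.zero_le D
    | succ n ih =>
      intro x hx
      rcases hrem : (G.play σ τ w n).2.1 with _ | ⟨⟨a, k⟩, v⟩
      · exact absurd hrem (hne n)
      have hc : G.play σ τ w n =
          ((G.play σ τ w n).1, (a, k) :: v, (G.play σ τ w n).2.2) := by rw [← hrem]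
      by_cases hcall : G.Fn a ∧ σ (G.play σ τ w n).1 a = JMove.call
      · have hnew : (G.play σ τ w (n + 1)).2.1 =
            (τ (G.play σ τ w n).1 a).map (fun b => (b, k + 1)) ++ v := by
          rw [play_succ, hc, step_cons_call _ _ _ _ _ _ _ _ hcall]
        have hdep : (G.play σ τ w (n + 1)).2.2 =
            max (G.play σ τ w n).2.2 (k + 1) := by
          rw [play_succ, hc, step_cons_call _ _ _ _ _ _ _ _ hcall]
        have hk1 : k + 1 ≤ D := by
          have := hD (n + 1)
          rw [hdep] at this
          exact le_trans (le_max_right _ _) this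
        rw [hnew] at hx
        rcases List.mem_append.1 hx with hx | hx
        · obtain ⟨b, -, rfl⟩ := List.mem_map.1 hx
          exact hk1
        · exact ih x (by rw [hrem]; exact List.mem_cons_of_mem _ hx)
      · have hnew : (G.play σ τ w (n + 1)).2.1 = v := by
          rw [play_succ, hc, step_cons_read _ _ _ _ _ _ _ _ hcall]
        rw [hnew] at hx
        exact ih x (by rw [hrem]; exact List.mem_cons_of_mem _ hx)
  set μ : List (A × ℕ) → Fin (D + 1) → ℕ :=
    fun l j => l.countP (fun x => x.2 = (j : ℕ)) with hμ
  have c1 : ∀ (a : A) (k : ℕ) (v : List (A × ℕ)) (j : Fin (D + 1)),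
      μ ((a, k) :: v) j = μ v j + (if k = (j : ℕ) then 1 else 0) := by
    intro a k v j
    by_cases h : k = (j : ℕ) <;> simp [hμ, List.countP_cons, h]
  have c2 : ∀ (u : List A) (k : ℕ) (v : List (A × ℕ)) (j : Fin (D + 1)),
      μ (u.map (fun b => (b, k + 1)) ++ v) j =
        (if k + 1 = (j : ℕ) then u.length else 0) + μ v j := by
    intro u k v j
    by_cases h : k + 1 = (j : ℕ) <;>
      simp [hμ, List.countP_append, List.countP_map, Function.comp, h, Nat.add_comm]
  have key : ∀ n, Pi.Lex ((· < ·) : Fin (D + 1) → Fin (D + 1) → Prop)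
      (fun {_} => ((· < ·) : ℕ → ℕ → Prop))
      (μ (G.play σ τ w (n + 1)).2.1) (μ (G.play σ τ w n).2.1) := by
    intro n
    rcases hrem : (G.play σ τ w n).2.1 with _ | ⟨⟨a, k⟩, v⟩
    · exact absurd hrem (hne n)
    have hk : k ≤ D := hlev n (a, k) (by rw [hrem]; exact List.mem_cons_self)
    have hc : G.play σ τ w n =
        ((G.play σ τ w n).1, (a, k) :: v, (G.play σ τ w n).2.2) := by rw [← hrem]
    set i : Fin (D + 1) := ⟨k, Nat.lt_succ_of_le hk⟩ with hi
    by_cases hcall : G.Fn a ∧ σ (G.play σ τ w n).1 a = JMove.call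
    · have hnew : (G.play σ τ w (n + 1)).2.1 =
          (τ (G.play σ τ w n).1 a).map (fun b => (b, k + 1)) ++ v := by
        rw [play_succ, hc, step_cons_call _ _ _ _ _ _ _ _ hcall]
      rw [hnew]
      refine ⟨i, fun j hj => ?_, ?_⟩
      · have hj' : (j : ℕ) < k := hj
        rw [c2, c1]
        have h1 : ¬ (k + 1 = (j : ℕ)) := by omega
        have h2 : ¬ (k = (j : ℕ)) := by omega
        simp [h1, h2]
      · have hik : (i : ℕ) = k := rfl
        have h1 : ¬ (k + 1 = (i : ℕ)) := by rw [hik]; omega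
        have h2 : k = (i : ℕ) := hik.symm
        rw [c2, c1, if_neg h1, if_pos h2.symm]
        simpa using Nat.lt_succ_self (μ v i)
    · have hnew : (G.play σ τ w (n + 1)).2.1 = v := by
        rw [play_succ, hc, step_cons_read _ _ _ _ _ _ _ _ hcall]
      rw [hnew]
      refine ⟨i, fun j hj => ?_, ?_⟩
      · have hj' : (j : ℕ) < k := hj
        rw [c1]
        have h2 : ¬ (k = (j : ℕ)) := by omega
        simp [h2]
      · have hik : (i : ℕ) = k := rfl
        rw [c1, if_pos hik.symm.symm]
        exact Nat.lt_succ_self (μ v i)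
  exact no_descend (Pi.Lex.wellFounded
    ((· < ·) : Fin (D + 1) → Fin (D + 1) → Prop) (fun _ => wellFounded_lt))
    (fun n => μ (G.play σ τ w n).2.1) key

end Termination
theorem statement2 {A : Type} [Fintype A] [LinearOrder A] (G : CFGame A)
    (h : G.BoundedDepthProperty) :
    ∃ σ : JStrat A, G.WeaklyDominant σ := by
  classical
  obtain ⟨B, hB⟩ := h
  have HΘ : ∀ w : List A, ∃ σk : JStrat A,
      (∀ v, (shortLex v w ∨ v = w) → (best G v ↔ G.WinsOn σk v)) ∧
      (∀ v, (shortLex v w ∨ v = w) → best G v →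
        ∀ τ : RStrat A, G.RValid τ → ∀ n : ℕ, (G.play σk τ v n).2.2 ≤ B v.length) := by
    intro w
    obtain ⟨σw, hmatch, hthrough⟩ := exists_matchAll G w
    obtain ⟨σk, hk⟩ := hB σw w.length
    have hWv : ∀ v, (shortLex v w ∨ v = w) → best G v → v ∈ G.W σw := by
      intro v hv hb
      rcases hv with hv | rfl
      · exact (hmatch v hv).1 hb
      · exact hthrough.1 hb
    have hlen : ∀ v : List A, (shortLex v w ∨ v = w) → v.length ≤ w.length := by
      intro v hv
      rcases hv with hv | rfl
      · rcases hv with hv | ⟨hv, -⟩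
        exacts [le_of_lt hv, le_of_eq hv]
      · exact le_rfl
    have hiff : ∀ v, (shortLex v w ∨ v = w) → (best G v ↔ G.WinsOn σk v) := by
      intro v
      refine shortLex_wf.induction
        (C := fun v => (shortLex v w ∨ v = w) → (best G v ↔ G.WinsOn σk v)) v ?_
      clear v; intro v ih hv
      constructor
      · intro hb
        exact (hk v (hWv v hv hb) (hlen v hv)).1
      · intro hwin
        refine (best_iff G v).2 ⟨σk, fun v' hv' => ih v' hv' ?_, hwin⟩
        rcases hv with hv | rfl
        · exact Or.inl (shortLex_trans hv' hv)
        · exact Or.inl hv'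
    refine ⟨σk, hiff, ?_⟩
    intro v hv hb τ hτ n
    exact (hk v (hWv v hv hb) (hlen v hv)).2 τ hτ n
  choose Θ hΘ1 hΘ2 using HΘ
  set Tail : List A → Set (List A) := fun w => {u | ¬ shortLex u w} with hTail
  have hTmono : ∀ v w : List A, shortLex w v → Tail v ⊆ Tail w := by
    intro v w hwv u hu hlt
    exact hu (shortLex_trans hlt hwv)
  have hdir : Directed (· ≥ ·) (fun w : List A => Filter.principal (Tail w)) := by
    intro v w
    rcases eq_or_ne v w with rfl | hne
    · exact ⟨v, le_rfl, le_rfl⟩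
    · rcases shortLex_total hne with hlt | hlt
      · exact ⟨w, Filter.principal_mono.2 (hTmono w v hlt), le_rfl⟩
      · exact ⟨v, le_rfl, Filter.principal_mono.2 (hTmono v w hlt)⟩
  haveI hnb : ∀ w : List A, Filter.NeBot (Filter.principal (Tail w)) := by
    intro w
    rw [Filter.principal_neBot_iff]
    exact ⟨w, shortLex_irrefl w⟩
  haveI hFne : Filter.NeBot (⨅ w : List A, Filter.principal (Tail w)) :=
    Filter.iInf_neBot_of_directed' hdir hnb
  set U : Ultrafilter (List A) :=
    Ultrafilter.of (⨅ w : List A, Filter.principal (Tail w)) with hU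
  have hUle : (U : Filter (List A)) ≤ ⨅ w : List A, Filter.principal (Tail w) :=
    Ultrafilter.of_le _
  have hTailU : ∀ w : List A, Tail w ∈ U := by
    intro w
    exact hUle (Filter.mem_iInf_of_mem w (Filter.mem_principal_self _))
  set σfin : JStrat A := fun α a =>
    if {u : List A | Θ u α a = JMove.call} ∈ U then JMove.call else JMove.read with hσfin
  have hagree : ∀ (α : List (HSym A)) (a : A),
      {u : List A | Θ u α a = σfin α a} ∈ U := by
    intro α a
    by_cases hc : {u : List A | Θ u α a = JMove.call} ∈ U
    · have hval : σfin α a = JMove.call := by rw [hσfin]; simp only [if_pos hc]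
      rw [hval]; exact hc
    · have hval : σfin α a = JMove.read := by rw [hσfin]; simp only [if_neg hc]
      rw [hval]
      have hcompl := (Ultrafilter.compl_mem_iff_notMem (f := U)).2 hc
      refine Filter.mem_of_superset hcompl (fun u hu => ?_)
      cases hread : Θ u α a with
      | call => exact absurd hread hu
      | read => exact hread
  have hplay_agree : ∀ (w : List A) (τ : RStrat A) (n : ℕ),
      ∃ u : List A, (shortLex w u ∨ w = u) ∧
        ∀ i ≤ n, G.play (Θ u) τ w i = G.play σfin τ w i := by
    intro w τ n
    have hmem : ((⋂ i ∈ Finset.range (n + 1), {u : List A | ∀ a k v,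
        (G.play σfin τ w i).2.1 = (a, k) :: v →
          Θ u (G.play σfin τ w i).1 a = σfin (G.play σfin τ w i).1 a}) ∩ Tail w) ∈ U := by
      refine Filter.inter_mem ?_ (hTailU w)
      refine (Filter.biInter_finset_mem _).2 ?_
      intro i _
      rcases hrem : (G.play σfin τ w i).2.1 with _ | ⟨⟨a, k⟩, v⟩
      · refine Filter.mem_of_superset Filter.univ_mem ?_
        intro u _ a k v hcontr
        cases hcontr
      · refine Filter.mem_of_superset (hagree (G.play σfin τ w i).1 a) ?_
        intro u hu a' k' v' h'
        cases h'
        exact hu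
    obtain ⟨u, hu1, hu2⟩ := U.nonempty_of_mem hmem
    have hor : shortLex w u ∨ w = u := by
      by_cases he : w = u
      · exact Or.inr he
      · rcases shortLex_total he with hlt | hlt
        · exact Or.inl hlt
        · exact absurd hlt hu2
    have hu1' : ∀ i < n + 1, ∀ a k v,
        (G.play σfin τ w i).2.1 = (a, k) :: v →
          Θ u (G.play σfin τ w i).1 a = σfin (G.play σfin τ w i).1 a := by
      intro i hi
      have := Set.mem_iInter₂.1 hu1 i (Finset.mem_range.2 hi)
      exact this
    have hcong := play_congr G σfin (Θ u) τ w (n + 1) hu1'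
    exact ⟨u, hor, fun i hi => hcong i (le_trans hi (Nat.le_succ n))⟩
  have hwin : ∀ w : List A, best G w → G.WinsOn σfin w := by
    intro w hbw τ hτ
    have hdep : ∀ n, (G.play σfin τ w n).2.2 ≤ B w.length := by
      intro n
      obtain ⟨u, hor, hagr⟩ := hplay_agree w τ n
      rw [← hagr n le_rfl]
      exact hΘ2 u w hor hbw τ hτ n
    obtain ⟨n, hn⟩ := terminates_of_bounded_depth G σfin τ w (B w.length) hdep
    obtain ⟨u, hor, hagr⟩ := hplay_agree w τ n
    have hwu : G.WinsOn (Θ u) w := (hΘ1 u w hor).1 hbw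
    obtain ⟨n', hn'1, hn'2⟩ := hwu τ hτ
    have hpe : G.play (Θ u) τ w n = G.play σfin τ w n := hagr n le_rfl
    rcases le_total n' n with hle | hle
    · have hfr := play_frozen G (Θ u) τ w hn'1 n hle
      refine ⟨n, hn, ?_⟩
      rw [← hpe, hfr]
      exact hn'2
    · have he : (G.play (Θ u) τ w n).2.1 = [] := by rw [hpe]; exact hn
      have hfr := play_frozen G (Θ u) τ w he n' hle
      refine ⟨n, hn, ?_⟩
      rw [← hpe, ← hfr]
      exact hn'2
  have hiff : ∀ w : List A, G.WinsOn σfin w ↔ best G w := by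
    intro w
    refine shortLex_wf.induction (C := fun w => G.WinsOn σfin w ↔ best G w) w ?_
    clear w; intro w ih
    constructor
    · intro hw
      exact (best_iff G w).2 ⟨σfin, fun v hv => (ih v hv).symm, hw⟩
    · exact hwin w
  refine ⟨σfin, ?_⟩
  intro σ'
  by_cases heq : G.W σ' = G.W σfin
  · exact Or.inl heq
  · right
    have hne : {v : List A | ¬ (v ∈ G.W σ' ↔ v ∈ G.W σfin)}.Nonempty := by
      by_contra hc
      rw [Set.not_nonempty_iff_eq_empty] at hc
      refine heq (Set.ext fun v => ?_)
      have hv := Set.eq_empty_iff_forall_notMem.1 hc v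
      exact not_not.1 hv
    obtain ⟨m, hm, hmin⟩ := shortLex_wf.has_min _ hne
    have hsmall : ∀ v, shortLex v m → (v ∈ G.W σ' ↔ v ∈ G.W σfin) := by
      intro v hv
      by_contra hc
      exact hmin v hc hv
    have hmW : m ∈ G.W σfin := by
      by_contra hns
      have hm' : m ∈ G.W σ' := by
        by_contra hns'
        exact hm (iff_of_false hns' hns)
      have hbm : best G m := (best_iff G m).2
        ⟨σ', fun v hv => ((hiff v).symm.trans (hsmall v hv).symm), hm'⟩
      exact hns ((hiff m).2 hbm)
    have hmn : m ∉ G.W σ' := fun hc => hm (iff_of_true hc hmW)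
    exact ⟨m, hmW, hmn, fun v hv => hsmall v hv⟩

end CFG
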